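/- arXiv:1806.05084 — 7 statements merged into one kernel-verified Lean document; each statement's English description precedes it below -/
import Mathlib

section
/- For every n > 0 and every s in {0,...,n+1}, the number of open j-dimensional faces of the tile T_s^n equals 0 if 0 \le j < s-1, and equals \binom{n+1-s}{n-j} if s-1 \le j \le n. -/
/-- The tile `T_s^n` is the standard `n`-simplex (with vertex set `Fin (n+1)`) with `s` facets
removed; removing the facet opposite to vertex `i` (for `i < s`) leaves exactly the open faces
`τ` containing all the vertices `i < s`.  The number of open `j`-dimensional faces of `T_s^n`
is `0` if `j < s - 1` and `C(n+1-s, n-j)` if `s - 1 ≤ j ≤ n`. -/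
theorem tile_face_numbers (n s : ℕ) (hn : 0 < n) (hs : s ≤ n + 1) (j : ℕ) (hj : j ≤ n) :
    ((Finset.univ : Finset (Finset (Fin (n + 1)))).filter
        (fun τ => τ.card = j + 1 ∧ ∀ i : Fin (n + 1), (i : ℕ) < s → i ∈ τ)).card
      = if j + 1 < s then 0 else (n + 1 - s).choose (n - j) := by
  classical
  set S : Finset (Fin (n + 1)) := Finset.univ.filter (fun i => (i : ℕ) < s) with hS
  have hSmem : ∀ i : Fin (n + 1), i ∈ S ↔ (i : ℕ) < s := by
    intro i; simp [hS]
  have hScard : S.card = s := by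
    rw [hS]
    rw [Finset.card_filter]
    rw [Fin.sum_univ_eq_sum_range (fun i => if i < s then 1 else 0)]
    rw [← Finset.card_filter]
    have : (Finset.range (n + 1)).filter (fun i => i < s) = Finset.range s := by
      ext x; simp only [Finset.mem_filter, Finset.mem_range]; omega
    rw [this, Finset.card_range]
  have hcond : ∀ τ : Finset (Fin (n + 1)),
      (∀ i : Fin (n + 1), (i : ℕ) < s → i ∈ τ) ↔ S ⊆ τ := by
    intro τ
    constructor
    · intro h i hi; exact h i ((hSmem i).1 hi)
    · intro h i hi; exact h ((hSmem i).2 hi)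
  by_cases hlt : j + 1 < s
  · rw [if_pos hlt]
    rw [Finset.card_eq_zero]
    rw [Finset.filter_eq_empty_iff]
    rintro τ _ ⟨hcard, hsub⟩
    have := Finset.card_le_card ((hcond τ).1 hsub)
    omega
  · rw [if_neg hlt]
    push_neg at hlt
    have hbij : ((Finset.univ : Finset (Finset (Fin (n + 1)))).filter
        (fun τ => τ.card = j + 1 ∧ ∀ i : Fin (n + 1), (i : ℕ) < s → i ∈ τ)).card
        = (Sᶜ.powersetCard (j + 1 - s)).card := by
      apply Finset.card_nbij' (fun τ => τ \ S) (fun σ => σ ∪ S)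
      · intro τ hτ
        simp only [Finset.mem_coe, Finset.mem_filter, Finset.mem_univ, true_and] at hτ
        obtain ⟨hcard, hsub⟩ := hτ
        rw [Finset.mem_coe, Finset.mem_powersetCard]
        constructor
        · intro x hx
          simp only [Finset.mem_sdiff] at hx
          simp [Finset.mem_compl, hx.2]
        · rw [Finset.card_sdiff_of_subset ((hcond τ).1 hsub), hcard, hScard]
      · intro σ hσ
        rw [Finset.mem_coe, Finset.mem_powersetCard] at hσ
        obtain ⟨hsub, hcard⟩ := hσ
        simp only [Finset.mem_coe, Finset.mem_filter, Finset.mem_univ, true_and]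
        refine ⟨?_, (hcond _).2 Finset.subset_union_right⟩
        rw [Finset.card_union_of_disjoint, hcard, hScard]
        · omega
        · exact Finset.disjoint_left.2 fun x hx hxS => by
            have := hsub hx; simp only [Finset.mem_compl] at this; exact this hxS
      · intro τ hτ
        simp only [Finset.mem_coe, Finset.mem_filter, Finset.mem_univ, true_and] at hτ
        exact Finset.sdiff_union_of_subset ((hcond τ).1 hτ.2)
      · intro σ hσ
        rw [Finset.mem_coe, Finset.mem_powersetCard] at hσ
        beta_reduce
        rw [Finset.union_sdiff_right]
        exact Finset.sdiff_eq_self_of_disjoint (Finset.disjoint_left.2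
          fun x hx hxS => by have := hσ.1 hx; simp [Finset.mem_compl] at this; exact this hxS)
    rw [hbij, Finset.card_powersetCard, Finset.card_compl, hScard]
    have h1 : Fintype.card (Fin (n + 1)) = n + 1 := by simp
    rw [h1]
    have : n - j = (n + 1 - s) - (j + 1 - s) := by omega
    rw [this, Nat.choose_symm (by omega)]
end

section
/- For every n > 0, the boundary of the standard (n+1)-simplex is the disjoint union of the tiles T_0^n, T_1^n, ..., T_{n+1}^n; in particular, counting open j-faces gives \binom{n+2}{j+1} = \sum_{s=0}^{n+1} f_j(T_s^n) for 0 \le j \le n, where f_j(T_s^n) = \binom{n+1-s}{n-j} if j \ge s-1 and 0 otherwise. -/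
/-- `tileFace n s j` = number of open `j`-dimensional faces of the tile `T_s^n`
(the standard `n`-simplex minus `s` facets). -/
def tileFace (n s j : ℕ) : ℕ :=
  if s ≤ j + 1 ∧ j ≤ n then (n + 1 - s).choose (n - j) else 0

/-- The boundary of the standard `(n+1)`-simplex (whose proper nonempty faces are the
nonempty proper subsets `τ` of `Fin (n+2)`) is the disjoint union of the tiles
`T_0^n, …, T_{n+1}^n`: every such face belongs to exactly one tile, the tile `T_s^n`
consisting of the faces containing all vertices `< s` and not the vertex `s`.
In particular, counting open `j`-faces gives `C(n+2, j+1) = ∑_{s=0}^{n+1} f_j(T_s^n)`. -/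
theorem boundary_simplex_tiled (n : ℕ) (hn : 0 < n) :
    (∀ τ : Finset (Fin (n + 2)), τ.Nonempty → τ ≠ Finset.univ →
        ∃! s : Fin (n + 2), (∀ i : Fin (n + 2), i < s → i ∈ τ) ∧ s ∉ τ) ∧
      ∀ j ≤ n, (n + 2).choose (j + 1) = ∑ s ∈ Finset.range (n + 2), tileFace n s j := by
  constructor
  · intro τ _ hproper
    have hc : τᶜ.Nonempty := by
      rwa [Finset.nonempty_iff_ne_empty, ne_eq, Finset.compl_eq_empty_iff]
    have key : ∀ a b : Fin (n + 2), ((∀ i : Fin (n + 2), i < a → i ∈ τ) ∧ a ∉ τ) →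
        ((∀ i : Fin (n + 2), i < b → i ∈ τ) ∧ b ∉ τ) → a ≤ b := by
      intro a b ha hb
      by_contra h
      exact hb.2 (ha.1 b (not_le.1 h))
    refine ⟨τᶜ.min' hc, ⟨?_, ?_⟩, fun s' hs' => le_antisymm (key _ _ hs' ⟨?_, ?_⟩)
      (key _ _ ⟨?_, ?_⟩ hs')⟩ <;>
    first
      | (intro i hi
         by_contra h
         exact absurd hi (not_lt.2 (Finset.min'_le _ _ (Finset.mem_compl.2 h))))
      | simpa using Finset.min'_mem τᶜ hc
  · intro j hj
    have h1 : ∑ s ∈ Finset.range (n + 2), tileFace n s j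
        = ∑ s ∈ Finset.range (j + 2), (n + 1 - s).choose (n - j) := by
      rw [← Finset.sum_subset (Finset.range_subset_range.2 (by omega : j + 2 ≤ n + 2))
        (fun s hs hs' => by
          rw [Finset.mem_range] at hs
          simp only [Finset.mem_range, not_lt] at hs'
          simp only [tileFace, if_neg (by omega : ¬(s ≤ j + 1 ∧ j ≤ n))])]
      refine Finset.sum_congr rfl fun s hs => ?_
      rw [Finset.mem_range] at hs
      simp only [tileFace, if_pos (⟨by omega, hj⟩ : s ≤ j + 1 ∧ j ≤ n)]
    have h2 : ∑ s ∈ Finset.range (j + 2), (n + 1 - s).choose (n - j)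
        = ∑ i ∈ Finset.range (j + 2), (i + (n - j)).choose (n - j) := by
      rw [← Finset.sum_range_reflect]
      refine Finset.sum_congr rfl fun i hi => ?_
      rw [Finset.mem_range] at hi
      congr 1
      omega
    have e1 : j + 1 + (n - j) + 1 = n + 2 := by omega
    have e2 : n - j + 1 = n + 2 - (j + 1) := by omega
    rw [h1, h2, show j + 2 = (j + 1) + 1 from rfl, Nat.sum_range_add_choose, e1, e2,
      Nat.choose_symm (by omega : j + 1 ≤ n + 2)]
end

section
/- Let K be a finite n-dimensional simplicial complex with a tiling \mathcal{T} by tiles T_0^n,...,T_{n+1}^n, with h_s(\mathcal{T}) tiles of type T_s^n. Then \sum_{s=0}^{n+1} h_s(\mathcal{T}) X^{n+1-s} = \sum_{i=0}^{n+1} f_{i-1}(K)(X-1)^{n+1-i}, where f_{-1}(K) is set equal to h_0(\mathcal{T}) and f_j(K) is the number of j-faces of K. -/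
/-- A finite abstract simplicial complex on a finite vertex set `V`. -/
def IsComplex {V : Type*} [DecidableEq V] (K : Finset (Finset V)) : Prop :=
  (∀ σ ∈ K, σ.Nonempty) ∧ ∀ σ ∈ K, ∀ τ, τ ⊆ σ → τ.Nonempty → τ ∈ K

/-- `fnum K p` = number of `p`-dimensional faces of `K`. -/
def fnum {V : Type*} [DecidableEq V] (K : Finset (Finset V)) (p : ℕ) : ℕ :=
  (K.filter fun σ => σ.card = p + 1).card

lemma binom_ext (m N : ℕ) (hm : m < N) (y : ℝ) :
    ∑ j ∈ Finset.range N, (Nat.choose m j : ℝ) * y ^ j = (y + 1) ^ m := by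
  rw [add_pow]
  simp only [one_pow, mul_one]
  rw [← Finset.sum_subset (Finset.range_subset_range.2 hm)]
  · exact Finset.sum_congr rfl fun j _ => mul_comm _ _
  · intro j _ hj
    rw [Finset.mem_range, not_lt] at hj
    rw [Nat.choose_eq_zero_of_lt (by omega)]
    simp

lemma key (n s : ℕ) (hsn : s ≤ n + 1) (x : ℝ) :
    ∑ j ∈ Finset.range (n+1), (tileFace n s j : ℝ) * (x-1)^(n-j)
      = x^(n+1-s) - (if s = 0 then (x-1)^(n+1) else 0) := by
  rw [← Finset.sum_range_reflect]
  have h1 : ∀ j ∈ Finset.range (n+1),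
      (tileFace n s (n + 1 - 1 - j) : ℝ) * (x-1)^(n - (n + 1 - 1 - j))
        = (Nat.choose (n+1-s) j : ℝ) * (x-1)^j := by
    intro j hj
    rw [Finset.mem_range] at hj
    have hj' : j ≤ n := by omega
    simp only [Nat.add_sub_cancel]
    rw [Nat.sub_sub_self hj']
    unfold tileFace
    by_cases hc : s ≤ n - j + 1
    · rw [if_pos ⟨hc, Nat.sub_le _ _⟩, Nat.sub_sub_self hj']
    · have hch : (n+1-s).choose j = 0 := Nat.choose_eq_zero_of_lt (by omega)
      rw [if_neg (by tauto), hch]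
  rw [Finset.sum_congr rfl h1]
  have h2 : ∑ j ∈ Finset.range (n+2), (Nat.choose (n+1-s) j : ℝ) * (x-1)^j
      = x ^ (n+1-s) := by
    have := binom_ext (n+1-s) (n+2) (by omega) (x-1)
    simpa [Finset.sum_congr, sub_add_cancel] using this
  rw [Finset.sum_range_succ] at h2
  have h3 : (Nat.choose (n+1-s) (n+1) : ℝ) = if s = 0 then 1 else 0 := by
    rcases Nat.eq_zero_or_pos s with rfl | hs
    · simp
    · rw [if_neg (by omega), Nat.choose_eq_zero_of_lt (by omega)]; simp
  rw [h3] at h2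
  rcases Nat.eq_zero_or_pos s with rfl | hs
  · norm_num at h2 ⊢; linarith
  · simp only [if_neg (by omega : ¬ s = 0)] at h2 ⊢; linarith

/-- Let `K` be a finite `n`-dimensional simplicial complex with a tiling by tiles
`T_0^n,…,T_{n+1}^n`, using `h s` tiles of type `T_s^n`; since the tiles are disjoint and
their open faces partition the open faces of `K`, `f_j(K) = ∑_s h_s f_j(T_s^n)`.
Then, with the convention `f_{-1}(K) = h 0` (here `f i` denotes the number of faces with
`i` vertices, i.e. of dimension `i - 1`),
`∑_{s=0}^{n+1} h_s X^{n+1-s} = ∑_{i=0}^{n+1} f_{i-1}(K) (X-1)^{n+1-i}`. -/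
theorem h_vector_polynomial_identity {V : Type*} [DecidableEq V] [Fintype V]
    (n : ℕ) (hn : 0 < n) (K : Finset (Finset V)) (hK : IsComplex K)
    (hdim : ∀ σ ∈ K, σ.card ≤ n + 1)
    (h f : ℕ → ℕ)
    (hf0 : f 0 = h 0)
    (hface : ∀ i, 1 ≤ i → i ≤ n + 2 → f i = fnum K (i - 1))
    (htiling : ∀ j ≤ n, fnum K j = ∑ s ∈ Finset.range (n + 2), h s * tileFace n s j) :
    ∀ x : ℝ,
      ∑ s ∈ Finset.range (n + 2), (h s : ℝ) * x ^ (n + 1 - s)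
        = ∑ i ∈ Finset.range (n + 2), (f i : ℝ) * (x - 1) ^ (n + 1 - i) := by
  intro x
  rw [Finset.sum_range_succ' (fun i => (f i : ℝ) * (x-1)^(n+1-i)) (n+1)]
  have hfv : ∀ i ∈ Finset.range (n+1), (f (i+1) : ℝ) * (x-1)^(n+1-(i+1))
      = ∑ s ∈ Finset.range (n+2), (h s : ℝ) * ((tileFace n s i : ℝ) * (x-1)^(n-i)) := by
    intro i hi
    rw [Finset.mem_range] at hi
    rw [hface (i+1) (by omega) (by omega)]
    have : (i + 1) - 1 = i := by omega
    rw [this, htiling i (by omega)]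
    push_cast
    rw [Finset.sum_mul]
    refine Finset.sum_congr rfl fun s _ => ?_
    ring
  rw [Finset.sum_congr rfl hfv, Finset.sum_comm]
  have hkey : ∀ s ∈ Finset.range (n+2),
      ∑ i ∈ Finset.range (n+1), (h s : ℝ) * ((tileFace n s i : ℝ) * (x-1)^(n-i))
        = (h s : ℝ) * x^(n+1-s) - (h s : ℝ) * (if s = 0 then (x-1)^(n+1) else 0) := by
    intro s hs
    rw [Finset.mem_range] at hs
    rw [← Finset.mul_sum, key n s (by omega) x, mul_sub]
  rw [Finset.sum_congr rfl hkey, Finset.sum_sub_distrib]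
  have hif : ∑ s ∈ Finset.range (n+2), (h s : ℝ) * (if s = 0 then (x-1)^(n+1) else 0)
      = (h 0 : ℝ) * (x-1)^(n+1) := by
    rw [Finset.sum_eq_single 0]
    · simp
    · intro b _ hb; simp [hb]
    · simp
  rw [hif, hf0]
  norm_num
end

section
/- If two tilings \mathcal{T} and \mathcal{T}' of the same finite n-dimensional simplicial complex K satisfy h_0(\mathcal{T}) = h_0(\mathcal{T}'), then they have the same h-vector: h_s(\mathcal{T}) = h_s(\mathcal{T}') for all s in {0,...,n+1}. -/
/-- If two tilings of the same finite `n`-dimensional simplicial complex `K`,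
with `h`-vectors `h` and `h'` (so that the face-counting relations
`f_j(K) = ∑_s h_s f_j(T_s^n)` hold for both), satisfy `h 0 = h' 0`,
then they have the same `h`-vector. -/
theorem tilings_same_h_vector {V : Type*} [DecidableEq V] [Fintype V]
    (n : ℕ) (hn : 0 < n) (K : Finset (Finset V)) (hK : IsComplex K)
    (hdim : ∀ σ ∈ K, σ.card ≤ n + 1)
    (h h' : ℕ → ℕ)
    (htiling : ∀ j ≤ n, fnum K j = ∑ s ∈ Finset.range (n + 2), h s * tileFace n s j)
    (htiling' : ∀ j ≤ n, fnum K j = ∑ s ∈ Finset.range (n + 2), h' s * tileFace n s j)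
    (h0 : h 0 = h' 0) :
    ∀ s ≤ n + 1, h s = h' s := by
  intro s
  induction s using Nat.strong_induction_on with
  | _ s ih =>
    intro hs
    match s, hs with
    | 0, _ => exact h0
    | j+1, hs =>
      have hj : j ≤ n := by omega
      have key : ∀ g : ℕ → ℕ, ∑ t ∈ Finset.range (n + 2), g t * tileFace n t j
          = (∑ t ∈ Finset.range (j + 1), g t * tileFace n t j) + g (j+1) := by
        intro g
        have step : ∑ t ∈ Finset.range (n + 2), g t * tileFace n t j
            = ∑ t ∈ Finset.range (j + 2), g t * tileFace n t j := by
          rw [← Finset.sum_subset (Finset.range_subset_range.2 (by omega : j + 2 ≤ n + 2))]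
          intro t _ ht
          have : ¬ (t ≤ j + 1) := by simp at ht; omega
          unfold tileFace
          rw [if_neg (by tauto), mul_zero]
        rw [step, Finset.sum_range_succ]
        congr 1
        unfold tileFace
        rw [if_pos ⟨le_refl _, hj⟩, (by omega : n + 1 - (j + 1) = n - j),
          Nat.choose_self, mul_one]
      have e1 := htiling j hj
      have e2 := htiling' j hj
      rw [key h] at e1
      rw [key h'] at e2
      have hsum : ∑ t ∈ Finset.range (j + 1), h t * tileFace n t j
          = ∑ t ∈ Finset.range (j + 1), h' t * tileFace n t j := by
        apply Finset.sum_congr rfl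
        intro t ht
        simp only [Finset.mem_range] at ht
        rw [ih t (by omega) (by omega)]
      omega
end

section
/- Let \mathcal{T} be a tiling of a finite n-dimensional simplicial complex K by the tiles T_0^n,...,T_{n+1}^n. Then the Euler characteristic of K equals h_0(\mathcal{T}) + (-1)^n h_{n+1}(\mathcal{T}). -/
lemma tileFace_eq (n s j : ℕ) (hj : j ≤ n) (hs : s ≤ n + 1) :
    tileFace n s j = (n + 1 - s).choose (n - j) := by
  unfold tileFace
  split_ifs with hc
  · rfl
  · have hlt : n + 1 - s < n - j := by omega
    exact (Nat.choose_eq_zero_of_lt hlt).symm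

lemma alt_sum_choose_tail (m n : ℕ) (hm : m ≤ n) :
    ∑ k ∈ Finset.range (n + 1), (-1 : ℤ) ^ k * (m.choose k) = if m = 0 then 1 else 0 := by
  rw [← Int.alternating_sum_range_choose (n := m)]
  symm
  apply Finset.sum_subset
  · intro x hx
    simp only [Finset.mem_range] at *
    omega
  · intro x _ hx
    simp only [Finset.mem_range, not_lt] at hx
    rw [Nat.choose_eq_zero_of_lt (by omega)]
    ring

lemma key_sum (n s : ℕ) (hn : 0 < n) (hs : s ≤ n + 1) :
    ∑ j ∈ Finset.range (n + 1), (-1 : ℤ) ^ j * (tileFace n s j : ℤ)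
      = if s = 0 then 1 else if s = n + 1 then (-1) ^ n else 0 := by
  set m := n + 1 - s with hm
  have h1 : ∑ j ∈ Finset.range (n + 1), (-1 : ℤ) ^ j * (tileFace n s j : ℤ)
      = ∑ j ∈ Finset.range (n + 1), (-1 : ℤ) ^ j * (m.choose (n - j) : ℤ) := by
    apply Finset.sum_congr rfl
    intro j hj
    rw [tileFace_eq n s j (by simpa using Nat.lt_succ_iff.mp (Finset.mem_range.mp hj)) hs]
  have h2 : ∑ j ∈ Finset.range (n + 1), (-1 : ℤ) ^ j * (m.choose (n - j) : ℤ)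
      = (-1 : ℤ) ^ n * ∑ k ∈ Finset.range (n + 1), (-1 : ℤ) ^ k * (m.choose k : ℤ) := by
    rw [Finset.mul_sum, ← Finset.sum_range_reflect]
    apply Finset.sum_congr rfl
    intro j hj
    have hjn : j ≤ n := Nat.lt_succ_iff.mp (Finset.mem_range.mp hj)
    have : n + 1 - 1 - j = n - j := by omega
    rw [this]
    have hpow : (-1 : ℤ) ^ j = (-1 : ℤ) ^ n * (-1 : ℤ) ^ (n - j) := by
      rw [← pow_add, show n + (n - j) = j + 2 * (n - j) by omega, pow_add, pow_mul]
      norm_num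
    rw [Nat.sub_sub_self hjn, hpow]
    ring_nf
    rw [pow_mul']
    norm_num
  rw [h1, h2]
  by_cases hs0 : s = 0
  · subst hs0
    have hmn : m = n + 1 := by omega
    rw [hmn]
    have := Int.alternating_sum_range_choose (n := n + 1)
    rw [Finset.sum_range_succ] at this
    have h3 : ∑ k ∈ Finset.range (n + 1), (-1 : ℤ) ^ k * ((n+1).choose k : ℤ)
        = -((-1 : ℤ) ^ (n + 1) * ((n+1).choose (n+1) : ℤ)) := by
      rw [if_neg (by omega)] at this
      linarith
    rw [h3]
    ring_nf
    rw [pow_mul']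
    norm_num
  · rw [alt_sum_choose_tail m n (by omega)]
    by_cases hsn : s = n + 1
    · rw [if_pos (by omega), if_neg hs0, if_pos hsn]; ring
    · rw [if_neg (by omega), if_neg hs0, if_neg hsn]; ring

/-- If the finite `n`-dimensional simplicial complex `K` carries a tiling with `h`-vector `h`
(so that `f_j(K) = ∑_s h_s f_j(T_s^n)` for all `j`), then the Euler characteristic
`χ(K) = ∑_j (-1)^j f_j(K)` equals `h 0 + (-1)^n h (n+1)`. -/
theorem euler_characteristic_of_tiling {V : Type*} [DecidableEq V] [Fintype V]
    (n : ℕ) (hn : 0 < n) (K : Finset (Finset V)) (hK : IsComplex K)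
    (hdim : ∀ σ ∈ K, σ.card ≤ n + 1)
    (h : ℕ → ℕ)
    (htiling : ∀ j ≤ n, fnum K j = ∑ s ∈ Finset.range (n + 2), h s * tileFace n s j) :
    ∑ j ∈ Finset.range (n + 1), (-1 : ℤ) ^ j * fnum K j
      = (h 0 : ℤ) + (-1 : ℤ) ^ n * h (n + 1) := by
  have step1 : ∑ j ∈ Finset.range (n + 1), (-1 : ℤ) ^ j * fnum K j
      = ∑ j ∈ Finset.range (n + 1), ∑ s ∈ Finset.range (n + 2),
          (h s : ℤ) * ((-1 : ℤ) ^ j * (tileFace n s j : ℤ)) := by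
    apply Finset.sum_congr rfl
    intro j hj
    rw [htiling j (Nat.lt_succ_iff.mp (Finset.mem_range.mp hj))]
    push_cast
    rw [Finset.mul_sum]
    apply Finset.sum_congr rfl
    intro s _
    ring
  rw [step1, Finset.sum_comm]
  have step2 : ∀ s ∈ Finset.range (n + 2),
      ∑ j ∈ Finset.range (n + 1), (h s : ℤ) * ((-1 : ℤ) ^ j * (tileFace n s j : ℤ))
      = (h s : ℤ) * (if s = 0 then 1 else if s = n + 1 then (-1 : ℤ) ^ n else 0) := by
    intro s hs
    rw [← Finset.mul_sum, key_sum n s hn (by simpa using Nat.lt_succ_iff.mp (Finset.mem_range.mp hs))]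
  rw [Finset.sum_congr rfl step2, Finset.sum_range_succ, Finset.sum_range_succ']
  have hmid : ∑ s ∈ Finset.range n,
      (h (s + 1) : ℤ) * (if s + 1 = 0 then 1 else if s + 1 = n + 1 then (-1 : ℤ) ^ n else 0) = 0 := by
    apply Finset.sum_eq_zero
    intro s hs
    have := Finset.mem_range.mp hs
    rw [if_neg (by omega), if_neg (by omega)]
    ring
  rw [hmid]
  rw [if_neg (show ¬(0 = n + 1) by omega), if_neg (show ¬(n + 1 = 0) by omega),
    if_pos rfl, if_pos rfl]
  ring
end

section
/- For n = 2, the matrix H_2 = [[1,4,1,0],[0,4,2,0],[0,2,4,0],[0,1,4,1]] is diagonalizable with eigenvalues 1, 1, 2, 6, commutes with the reversal involution \rho_2 of coordinates, and the vector (1,1,1,1) is an eigenvector for the eigenvalue 6. -/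
/-- The subdivision matrix `H_2 = [[1,4,1,0],[0,4,2,0],[0,2,4,0],[0,1,4,1]]` is diagonalizable
with eigenvalues `1, 1, 2, 6`, commutes with the reversal involution
`ρ₂(h₀,h₁,h₂,h₃) = (h₃,h₂,h₁,h₀)`, and `(1,1,1,1)` is an eigenvector for the eigenvalue `6`. -/
theorem H2_diagonalizable_and_symmetric :
    (∃ P : Matrix (Fin 4) (Fin 4) ℝ, IsUnit P ∧
      (!![1,4,1,0; 0,4,2,0; 0,2,4,0; 0,1,4,1] : Matrix (Fin 4) (Fin 4) ℝ)
          = P * Matrix.diagonal ![1, 1, 2, 6] * P⁻¹) ∧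
    (!![1,4,1,0; 0,4,2,0; 0,2,4,0; 0,1,4,1] : Matrix (Fin 4) (Fin 4) ℝ)
        * !![0,0,0,1; 0,0,1,0; 0,1,0,0; 1,0,0,0]
      = (!![0,0,0,1; 0,0,1,0; 0,1,0,0; 1,0,0,0] : Matrix (Fin 4) (Fin 4) ℝ)
        * !![1,4,1,0; 0,4,2,0; 0,2,4,0; 0,1,4,1] ∧
    (!![1,4,1,0; 0,4,2,0; 0,2,4,0; 0,1,4,1] : Matrix (Fin 4) (Fin 4) ℝ).mulVec ![1,1,1,1]
      = (6 : ℝ) • ![1,1,1,1] := by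
  refine ⟨⟨!![1,0,3,1; 0,0,1,1; 0,0,-1,1; 0,1,-3,1], ?_, ?_⟩, ?_, ?_⟩
  · rw [Matrix.isUnit_iff_isUnit_det]
    simp [Matrix.det_succ_row_zero, Fin.sum_univ_succ, Matrix.vecHead, Matrix.vecTail]
  · have hP : IsUnit (!![1,0,3,1; 0,0,1,1; 0,0,-1,1; 0,1,-3,1] : Matrix (Fin 4) (Fin 4) ℝ) := by
      rw [Matrix.isUnit_iff_isUnit_det]
      simp [Matrix.det_succ_row_zero, Fin.sum_univ_succ, Matrix.vecHead, Matrix.vecTail]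
    have key : (!![1,4,1,0; 0,4,2,0; 0,2,4,0; 0,1,4,1] : Matrix (Fin 4) (Fin 4) ℝ)
        * !![1,0,3,1; 0,0,1,1; 0,0,-1,1; 0,1,-3,1]
        = !![1,0,3,1; 0,0,1,1; 0,0,-1,1; 0,1,-3,1] * Matrix.diagonal ![1, 1, 2, 6] := by
      ext i j
      fin_cases i <;> fin_cases j <;>
        simp [Matrix.mul_apply, Fin.sum_univ_four, Matrix.diagonal, Matrix.vecHead, Matrix.vecTail] <;> norm_num
    calc (!![1,4,1,0; 0,4,2,0; 0,2,4,0; 0,1,4,1] : Matrix (Fin 4) (Fin 4) ℝ)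
        = !![1,4,1,0; 0,4,2,0; 0,2,4,0; 0,1,4,1]
          * !![1,0,3,1; 0,0,1,1; 0,0,-1,1; 0,1,-3,1]
          * (!![1,0,3,1; 0,0,1,1; 0,0,-1,1; 0,1,-3,1] : Matrix (Fin 4) (Fin 4) ℝ)⁻¹ := by
            rw [Matrix.mul_nonsing_inv_cancel_right _ _
              ((Matrix.isUnit_iff_isUnit_det _).mp hP)]
      _ = _ := by rw [key]
  · ext i j
    fin_cases i <;> fin_cases j <;>
      simp [Matrix.mul_apply, Fin.sum_univ_four, Matrix.vecHead, Matrix.vecTail]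
  · funext i
    fin_cases i <;>
      simp [Matrix.mulVec, dotProduct, Fin.sum_univ_four, Matrix.vecHead, Matrix.vecTail] <;> norm_num
end

section
/- For every n > 0, the barycentric subdivision Sd(\Delta_n) of the standard n-simplex contains a packing of pairwise disjoint closed simplices consisting of one n-simplex and, for every j in {0,...,n-1}, exactly 2^{n-1-j} simplices of dimension j. -/
open Finset

/-- The "prefix" `{0,…,i-1}` inside `Fin (n+1)`. -/
def bpre (n i : ℕ) : Finset (Fin (n + 1)) := Finset.univ.filter (fun x => (x : ℕ) < i)

lemma mem_bpre {n i : ℕ} {x : Fin (n + 1)} : x ∈ bpre n i ↔ (x : ℕ) < i := by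
  simp [bpre]

lemma bpre_mono {n i j : ℕ} (h : i ≤ j) : bpre n i ⊆ bpre n j := by
  intro x hx; rw [mem_bpre] at *; omega

lemma card_bpre {n i : ℕ} (h : i ≤ n + 1) : (bpre n i).card = i := by
  rcases Nat.lt_or_ge i (n + 1) with hi | hi
  · have : bpre n i = Finset.Iio (⟨i, hi⟩ : Fin (n + 1)) := by
      ext x; simp [mem_bpre, Fin.lt_def]
    rw [this, Fin.card_Iio]
  · have hi' : i = n + 1 := by omega
    subst hi'
    have : bpre n (n + 1) = Finset.univ := by
      ext x; simp [mem_bpre, x.isLt]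
    rw [this]; simp

/-- Decoding: a set determines its prefix length and its tail. -/
lemma bdecode {n i i' : ℕ} {B B' : Finset (Fin (n + 1))}
    (hi : ∀ b ∈ B, i < (b : ℕ)) (hi' : ∀ b ∈ B', i' < (b : ℕ))
    (hin : i ≤ n + 1) (hin' : i' ≤ n + 1)
    (h : bpre n i ∪ B = bpre n i' ∪ B') : i = i' ∧ B = B' := by
  have key : ∀ (a a' : ℕ) (C C' : Finset (Fin (n + 1))),
      (∀ b ∈ C, a < (b : ℕ)) → (∀ b ∈ C', a' < (b : ℕ)) → a' ≤ n + 1 →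
      bpre n a ∪ C = bpre n a' ∪ C' → ¬ a < a' := by
    intro a a' C C' hC hC' ha' heq hlt
    have han : a < n + 1 := by omega
    have hxval : ((⟨a, han⟩ : Fin (n + 1)) : ℕ) = a := rfl
    have hx : (⟨a, han⟩ : Fin (n + 1)) ∈ bpre n a' ∪ C' :=
      mem_union_left _ (by rw [mem_bpre, hxval]; exact hlt)
    rw [← heq] at hx
    rcases mem_union.mp hx with h1 | h1
    · rw [mem_bpre, hxval] at h1; omega
    · have h2 := hC _ h1; rw [hxval] at h2; omega
  have hii : i = i' := by
    rcases Nat.lt_trichotomy i i' with hlt | he | hlt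
    · exact absurd hlt (key i i' B B' hi hi' hin' h)
    · exact he
    · exact absurd hlt (key i' i B' B hi' hi hin h.symm)
  subst hii
  refine ⟨rfl, ?_⟩
  ext x
  by_cases hx : (x : ℕ) < i
  · constructor
    · intro hb; exact absurd (hi x hb) (by omega)
    · intro hb; exact absurd (hi' x hb) (by omega)
  · have := Finset.ext_iff.mp h x
    simp only [mem_union, mem_bpre] at this
    constructor
    · intro hb; rcases this.mp (Or.inr hb) with h1 | h1
      · omega
      · exact h1
    · intro hb; rcases this.mpr (Or.inr hb) with h1 | h1
      · omega
      · exact h1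

/-- The chain of a nonempty tail `B`: `{bpre i ∪ B : i < min B}`. -/
def bchain (n : ℕ) (B : Finset (Fin (n + 1))) : Finset (Finset (Fin (n + 1))) :=
  (Finset.range (if h : B.Nonempty then ((B.min' h : Fin (n + 1)) : ℕ) else 0)).image
    (fun i => bpre n i ∪ B)

/-- The maximal chain: all prefixes `{0,…,i}`, `i ≤ n`. -/
def bmax (n : ℕ) : Finset (Finset (Fin (n + 1))) :=
  (Finset.range (n + 1)).image (fun i => bpre n (i + 1))

def goodTail (n : ℕ) (B : Finset (Fin (n + 1))) : Prop :=
  (0 : Fin (n + 1)) ∉ B ∧ B.Nonempty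

instance (n : ℕ) : DecidablePred (goodTail n) := fun B => instDecidableAnd

lemma goodTail_min_pos {n : ℕ} {B : Finset (Fin (n + 1))} (hB : goodTail n B) :
    1 ≤ ((B.min' hB.2 : Fin (n + 1)) : ℕ) := by
  by_contra h
  have h0 : ((B.min' hB.2 : Fin (n + 1)) : ℕ) = 0 := by omega
  have : (B.min' hB.2) = (0 : Fin (n + 1)) := by
    apply Fin.ext; simpa using h0
  exact hB.1 (this ▸ B.min'_mem hB.2)

lemma mem_bchain {n : ℕ} {B : Finset (Fin (n + 1))} (hB : B.Nonempty)
    {A : Finset (Fin (n + 1))} :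
    A ∈ bchain n B ↔ ∃ i < ((B.min' hB : Fin (n + 1)) : ℕ), A = bpre n i ∪ B := by
  simp [bchain, dif_pos hB, eq_comm]

lemma tail_gt {n : ℕ} {B : Finset (Fin (n + 1))} (hB : B.Nonempty) {i : ℕ}
    (hi : i < ((B.min' hB : Fin (n + 1)) : ℕ)) : ∀ b ∈ B, i < (b : ℕ) := by
  intro b hb
  have := B.min'_le b hb
  have : ((B.min' hB : Fin (n + 1)) : ℕ) ≤ (b : ℕ) := this
  omega

lemma card_bchain {n : ℕ} {B : Finset (Fin (n + 1))} (hB : B.Nonempty) :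
    (bchain n B).card = ((B.min' hB : Fin (n + 1)) : ℕ) := by
  rw [bchain, dif_pos hB, Finset.card_image_of_injOn, Finset.card_range]
  intro i hi j hj hij
  rw [Finset.mem_coe, Finset.mem_range] at hi hj
  have hm : ((B.min' hB : Fin (n + 1)) : ℕ) ≤ n := Fin.is_le _
  exact (bdecode (tail_gt hB hi) (tail_gt hB hj) (by omega) (by omega) hij).1

lemma card_bmax (n : ℕ) : (bmax n).card = n + 1 := by
  rw [bmax, Finset.card_image_of_injOn, Finset.card_range]
  intro i hi j hj hij
  rw [Finset.mem_coe, Finset.mem_range] at hi hj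
  have := bdecode (B := (∅ : Finset (Fin (n+1)))) (B' := ∅) (i := i+1) (i' := j+1)
    (by simp) (by simp) (by omega) (by omega) (by simpa using hij)
  omega

/-- The packing. -/
def bpack (n : ℕ) : Finset (Finset (Finset (Fin (n + 1)))) :=
  insert (bmax n) ((Finset.univ.filter (goodTail n)).image (bchain n))

lemma bchain_inj {n : ℕ} : Set.InjOn (bchain n) (Finset.univ.filter (goodTail n)) := by
  intro B hB B' hB' h
  rw [Finset.coe_filter] at hB hB'
  simp only [Set.mem_setOf_eq] at hB hB'
  have hBn := hB.2.2; have hB'n := hB'.2.2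
  have hmem : B ∈ bchain n B := by
    rw [mem_bchain hBn]
    exact ⟨0, goodTail_min_pos hB.2, by simp [bpre]⟩
  have hmem' : B' ∈ bchain n B' := by
    rw [mem_bchain hB'n]
    exact ⟨0, goodTail_min_pos hB'.2, by simp [bpre]⟩
  rw [h, mem_bchain hB'n] at hmem
  rw [← h, mem_bchain hBn] at hmem'
  obtain ⟨i, _, hi⟩ := hmem
  obtain ⟨j, _, hj⟩ := hmem'
  have h1 : B' ⊆ B := hi ▸ Finset.subset_union_right
  have h2 : B ⊆ B' := hj ▸ Finset.subset_union_right
  exact Finset.Subset.antisymm h2 h1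

lemma bmax_card_big {n : ℕ} {B : Finset (Fin (n + 1))} (hB : B.Nonempty) :
    (bchain n B).card ≤ n := by
  rw [card_bchain hB]; exact Fin.is_le _

lemma disjoint_bmax_bchain {n : ℕ} {B : Finset (Fin (n + 1))} (hB : goodTail n B) :
    Disjoint (bmax n) (bchain n B) := by
  rw [Finset.disjoint_left]
  intro A hA hA'
  rw [bmax, Finset.mem_image] at hA
  obtain ⟨i, hi, rfl⟩ := hA
  rw [Finset.mem_range] at hi
  rw [mem_bchain hB.2] at hA'
  obtain ⟨i', hi', hEq⟩ := hA'
  have hEq' : bpre n (i + 1) ∪ (∅ : Finset (Fin (n + 1))) = bpre n i' ∪ B := by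
    rw [Finset.union_empty]; exact hEq
  have hm : ((B.min' hB.2 : Fin (n + 1)) : ℕ) ≤ n := Fin.is_le _
  have := bdecode (by simp) (tail_gt hB.2 hi') (by omega) (by omega) hEq'
  exact hB.2.ne_empty this.2.symm

lemma disjoint_bchains {n : ℕ} {B B' : Finset (Fin (n + 1))}
    (hB : goodTail n B) (hB' : goodTail n B') (hne : B ≠ B') :
    Disjoint (bchain n B) (bchain n B') := by
  rw [Finset.disjoint_left]
  intro A hA hA'
  rw [mem_bchain hB.2] at hA
  rw [mem_bchain hB'.2] at hA'
  obtain ⟨i, hi, rfl⟩ := hA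
  obtain ⟨i', hi', hEq⟩ := hA'
  have hm : ((B.min' hB.2 : Fin (n + 1)) : ℕ) ≤ n := Fin.is_le _
  have hm' : ((B'.min' hB'.2 : Fin (n + 1)) : ℕ) ≤ n := Fin.is_le _
  exact hne (bdecode (tail_gt hB.2 hi) (tail_gt hB'.2 hi') (by omega) (by omega) hEq).2

lemma count_tails {n j : ℕ} (hj : j < n) :
    ((Finset.univ.filter (goodTail n)).filter
        (fun B => (bchain n B).card = j + 1)).card = 2 ^ (n - 1 - j) := by
  have hjn : j + 1 < n + 1 := by omega
  have hmval : ((⟨j + 1, hjn⟩ : Fin (n + 1)) : ℕ) = j + 1 := rfl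
  -- rewrite the filter set
  have hset : ((Finset.univ.filter (goodTail n)).filter
        (fun B => (bchain n B).card = j + 1))
      = Finset.univ.filter (fun B : Finset (Fin (n + 1)) =>
          (⟨j + 1, hjn⟩ : Fin (n + 1)) ∈ B ∧ ∀ b ∈ B, j + 1 ≤ (b : ℕ)) := by
    ext B
    simp only [Finset.mem_filter, Finset.mem_univ, true_and]
    constructor
    · rintro ⟨hg, hc⟩
      rw [card_bchain hg.2] at hc
      have hmem := B.min'_mem hg.2
      have heq : B.min' hg.2 = (⟨j + 1, hjn⟩ : Fin (n + 1)) := by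
        apply Fin.ext; rw [hmval]; exact hc
      refine ⟨heq ▸ hmem, fun b hb => ?_⟩
      have h1 := B.min'_le b hb
      have h2 : ((B.min' hg.2 : Fin (n + 1)) : ℕ) ≤ (b : ℕ) := h1
      omega
    · rintro ⟨hmB, hall⟩
      have hne : B.Nonempty := ⟨_, hmB⟩
      have h0 : (0 : Fin (n + 1)) ∉ B := fun h0 => by
        have := hall _ h0; simp at this
      refine ⟨⟨h0, hne⟩, ?_⟩
      rw [card_bchain hne]
      have h1 : ((B.min' hne : Fin (n + 1)) : ℕ) ≤ j + 1 := by
        have h2 := B.min'_le _ hmB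
        have h3 : ((B.min' hne : Fin (n + 1)) : ℕ) ≤ ((⟨j + 1, hjn⟩ : Fin (n + 1)) : ℕ) := h2
        omega
      have h2 : j + 1 ≤ ((B.min' hne : Fin (n + 1)) : ℕ) :=
        hall _ (B.min'_mem hne)
      omega
  rw [hset]
  -- bijection with powerset of elements above j+1
  have hcardD : (Finset.univ.filter (fun x : Fin (n + 1) => j + 1 < (x : ℕ))).card
      = n - 1 - j := by
    have hsplit := Finset.card_filter_add_card_filter_not
      (s := (Finset.univ : Finset (Fin (n + 1)))) (p := fun x => j + 1 < (x : ℕ))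
    have hneg : (Finset.univ.filter (fun x : Fin (n + 1) => ¬ j + 1 < (x : ℕ)))
        = bpre n (j + 2) := by
      ext x; simp only [Finset.mem_filter, Finset.mem_univ, true_and, mem_bpre]; omega
    rw [hneg, card_bpre (by omega), Finset.card_univ, Fintype.card_fin] at hsplit
    omega
  have hbij : (Finset.univ.filter (fun B : Finset (Fin (n + 1)) =>
      (⟨j + 1, hjn⟩ : Fin (n + 1)) ∈ B ∧ ∀ b ∈ B, j + 1 ≤ (b : ℕ))).card
      = (Finset.univ.filter (fun x : Fin (n + 1) => j + 1 < (x : ℕ))).powerset.card := by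
    apply Finset.card_bij' (fun B _ => B.erase (⟨j + 1, hjn⟩ : Fin (n + 1)))
      (fun S _ => insert (⟨j + 1, hjn⟩ : Fin (n + 1)) S)
    · intro B hB
      simp only [Finset.mem_filter, Finset.mem_univ, true_and] at hB
      exact Finset.insert_erase hB.1
    · intro S hS
      rw [Finset.mem_powerset] at hS
      apply Finset.erase_insert
      intro hmS
      have := hS hmS
      rw [Finset.mem_filter, hmval] at this
      omega
    · intro B hB
      simp only [Finset.mem_filter, Finset.mem_univ, true_and] at hB
      rw [Finset.mem_powerset]
      intro x hx
      rw [Finset.mem_erase] at hx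
      rw [Finset.mem_filter]
      refine ⟨Finset.mem_univ _, ?_⟩
      have h1 := hB.2 _ hx.2
      have hne : (x : ℕ) ≠ j + 1 := fun h => hx.1 (Fin.ext (by rw [hmval]; exact h))
      omega
    · intro S hS
      rw [Finset.mem_powerset] at hS
      simp only [Finset.mem_filter, Finset.mem_univ, true_and]
      refine ⟨Finset.mem_insert_self _ _, fun b hb => ?_⟩
      rcases Finset.mem_insert.mp hb with rfl | hb
      · omega
      · have := hS hb; rw [Finset.mem_filter] at this; omega
  rw [hbij, Finset.card_powerset, hcardD]

lemma bmax_notmem {n : ℕ} :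
    bmax n ∉ (Finset.univ.filter (goodTail n)).image (bchain n) := by
  intro h
  rw [Finset.mem_image] at h
  obtain ⟨B, hB, hEq⟩ := h
  rw [Finset.mem_filter] at hB
  have h1 := bmax_card_big hB.2.2
  rw [hEq, card_bmax] at h1
  omega

/-- The first barycentric subdivision `Sd(Δ_n)` has as vertices the nonempty faces of `Δ_n`
(nonempty subsets of `Fin (n+1)`) and as `q`-simplices the chains of `q+1` faces ordered by
strict inclusion; two closed simplices of a simplicial complex are disjoint subsets of
`|Δ_n|` exactly when they share no vertex.  `Sd(Δ_n)` contains a packing of pairwise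
disjoint closed simplices consisting of one `n`-simplex and, for each `j ∈ {0,…,n-1}`,
exactly `2^{n-1-j}` simplices of dimension `j`. -/
theorem packing_in_barycentric_subdivision (n : ℕ) (hn : 0 < n) :
    ∃ P : Finset (Finset (Finset (Fin (n + 1)))),
      (∀ c ∈ P, (∀ τ ∈ c, Finset.Nonempty τ) ∧ ∀ a ∈ c, ∀ b ∈ c, a ⊆ b ∨ b ⊆ a) ∧
      (∀ c ∈ P, ∀ c' ∈ P, c ≠ c' → Disjoint c c') ∧
      (P.filter fun c => c.card = n + 1).card = 1 ∧
      ∀ j < n, (P.filter fun c => c.card = j + 1).card = 2 ^ (n - 1 - j) := by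
  refine ⟨bpack n, ?_, ?_, ?_, ?_⟩
  · intro c hc
    rw [bpack, Finset.mem_insert] at hc
    rcases hc with rfl | hc
    · constructor
      · intro τ hτ
        rw [bmax, Finset.mem_image] at hτ
        obtain ⟨i, hi, rfl⟩ := hτ
        exact ⟨0, by rw [mem_bpre]; simp⟩
      · intro a ha b hb
        rw [bmax, Finset.mem_image] at ha hb
        obtain ⟨i, hi, rfl⟩ := ha
        obtain ⟨i', hi', rfl⟩ := hb
        rcases le_total i i' with h | h
        · exact Or.inl (bpre_mono (by omega))
        · exact Or.inr (bpre_mono (by omega))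
    · rw [Finset.mem_image] at hc
      obtain ⟨B, hB, rfl⟩ := hc
      rw [Finset.mem_filter] at hB
      have hBn := hB.2.2
      constructor
      · intro τ hτ
        rw [mem_bchain hBn] at hτ
        obtain ⟨i, hi, rfl⟩ := hτ
        exact hBn.mono Finset.subset_union_right
      · intro a ha b hb
        rw [mem_bchain hBn] at ha hb
        obtain ⟨i, hi, rfl⟩ := ha
        obtain ⟨i', hi', rfl⟩ := hb
        rcases le_total i i' with h | h
        · exact Or.inl (Finset.union_subset_union_left (bpre_mono h))
        · exact Or.inr (Finset.union_subset_union_left (bpre_mono h))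
  · intro c hc c' hc' hne
    rw [bpack, Finset.mem_insert] at hc hc'
    rcases hc with rfl | hc
    · rcases hc' with h' | hc'
      · exact absurd h'.symm hne
      · rw [Finset.mem_image] at hc'
        obtain ⟨B, hB, rfl⟩ := hc'
        rw [Finset.mem_filter] at hB
        exact disjoint_bmax_bchain hB.2
    · rcases hc' with rfl | hc'
      · rw [Finset.mem_image] at hc
        obtain ⟨B, hB, rfl⟩ := hc
        rw [Finset.mem_filter] at hB
        exact (disjoint_bmax_bchain hB.2).symm
      · rw [Finset.mem_image] at hc hc'
        obtain ⟨B, hB, rfl⟩ := hc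
        obtain ⟨B', hB', rfl⟩ := hc'
        rw [Finset.mem_filter] at hB hB'
        exact disjoint_bchains hB.2 hB'.2 (fun h => hne (by rw [h]))
  · rw [bpack, Finset.filter_insert, if_pos (card_bmax n)]
    have hempty : (((Finset.univ.filter (goodTail n)).image (bchain n)).filter
        (fun c => c.card = n + 1)) = ∅ := by
      rw [Finset.filter_eq_empty_iff]
      intro c hc
      rw [Finset.mem_image] at hc
      obtain ⟨B, hB, rfl⟩ := hc
      rw [Finset.mem_filter] at hB
      have := bmax_card_big hB.2.2
      omega
    rw [hempty]
    simp
  · intro j hj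
    rw [bpack, Finset.filter_insert, if_neg (by rw [card_bmax]; omega),
      Finset.filter_image,
      Finset.card_image_of_injOn
        (bchain_inj.mono (Finset.coe_subset.mpr (Finset.filter_subset _ _)))]
    exact count_tails hj
end
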